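/- Suppose the system is controllable using s-sparse inputs with a common support, i.e., there exist an index set S ⊆ {1,…,L} with |S| = s and, for every x_init, x_final ∈ ℝ^N, a positive integer K and inputs h_1,…,h_K supported on S steering x_init to x_final. Then min{rank(H), s} ≥ g_D ≥ N − rank(D), where g_D is the largest geometric multiplicity of a complex eigenvalue of D, i.e., the maximum over λ ∈ ℂ of the dimension over ℂ of the kernel of λI − D. -/

import Mathlib

open Matrix

def cpx {m : ℕ} (v : Fin m → ℝ) : Fin m → ℂ := fun i => (v i : ℂ)

lemma cpx_mem_span {m : ℕ} {s : Set (Fin m → ℝ)} {x : Fin m → ℝ}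
    (hx : x ∈ Submodule.span ℝ s) : cpx x ∈ Submodule.span ℂ (cpx '' s) := by
  induction hx using Submodule.span_induction with
  | mem y hy => exact Submodule.subset_span ⟨y, hy, rfl⟩
  | zero =>
      have h0 : cpx (0 : Fin m → ℝ) = 0 := by funext i; simp [cpx]
      rw [h0]; exact zero_mem _
  | add y z _ _ ihy ihz =>
      have h0 : cpx (y + z) = cpx y + cpx z := by funext i; simp [cpx]
      rw [h0]; exact add_mem ihy ihz
  | smul c y _ ihy =>
      have h0 : cpx (c • y) = (c : ℂ) • cpx y := by funext i; simp [cpx]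
      rw [h0]; exact Submodule.smul_mem _ _ ihy

lemma rank_map_ofReal_le {m n : ℕ} (A : Matrix (Fin m) (Fin n) ℝ) :
    (A.map Complex.ofReal).rank ≤ A.rank := by
  classical
  set V : Submodule ℝ (Fin m → ℝ) := Submodule.span ℝ (Set.range Aᵀ) with hV
  let b := Module.finBasis ℝ V
  let c : Fin (Module.finrank ℝ V) → (Fin m → ℝ) := fun i => (b i : Fin m → ℝ)
  have hspan : V = Submodule.span ℝ (Set.range c) := by
    have h1 : Submodule.map V.subtype ⊤ = V := Submodule.map_subtype_top V
    rw [← b.span_eq, Submodule.map_span, ← Set.range_comp] at h1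
    exact h1.symm
  have hcols : Set.range (A.map Complex.ofReal)ᵀ ⊆
      (Submodule.span ℂ (Set.range (cpx ∘ c)) : Set (Fin m → ℂ)) := by
    rintro _ ⟨j, rfl⟩
    have hcol : Aᵀ j ∈ Submodule.span ℝ (Set.range c) := by
      rw [← hspan]; exact Submodule.subset_span ⟨j, rfl⟩
    have h2 := cpx_mem_span hcol
    rw [← Set.range_comp] at h2
    have h3 : (A.map Complex.ofReal)ᵀ j = cpx (Aᵀ j) := by
      funext i; simp [cpx, Matrix.map_apply]
    rwa [h3]
  calc (A.map Complex.ofReal).rank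
      = Module.finrank ℂ (Submodule.span ℂ (Set.range (A.map Complex.ofReal)ᵀ)) :=
        Matrix.rank_eq_finrank_span_cols _
    _ ≤ Module.finrank ℂ (Submodule.span ℂ (Set.range (cpx ∘ c))) :=
        Submodule.finrank_mono (Submodule.span_le.mpr hcols)
    _ ≤ Fintype.card (Fin (Module.finrank ℝ V)) := finrank_range_le_card _
    _ = A.rank := by rw [Fintype.card_fin, hV, Matrix.rank_eq_finrank_span_cols]; rfl

lemma finrank_ker_eq {n : ℕ} (M : Matrix (Fin n) (Fin n) ℂ) :
    Module.finrank ℂ (LinearMap.ker M.mulVecLin) = n - M.rank := by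
  have h := M.mulVecLin.finrank_range_add_finrank_ker
  rw [Module.finrank_pi, Fintype.card_fin] at h
  have hr : M.rank = Module.finrank ℂ (LinearMap.range M.mulVecLin) := rfl
  omega

/-- `h` is `s`-sparse: at most `s` nonzero entries. -/
def IsSparse {L : ℕ} (s : ℕ) (h : Fin L → ℝ) : Prop :=
  {i : Fin L | h i ≠ 0}.ncard ≤ s

/-- Inputs `h 0, …, h (K-1)` steer the state `xinit` to `xfinal`:
`xfinal − D^K xinit = ∑_{k=1}^{K} D^{K−k} H h_k`. -/
def Steers {N L : ℕ} (D : Matrix (Fin N) (Fin N) ℝ) (H : Matrix (Fin N) (Fin L) ℝ)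
    (K : ℕ) (h : Fin K → Fin L → ℝ) (xinit xfinal : Fin N → ℝ) : Prop :=
  xfinal - (D ^ K) *ᵥ xinit = ∑ k : Fin K, (D ^ (K - 1 - (k : ℕ))) *ᵥ (H *ᵥ h k)

/-- The system `(D, H)` is `s`-sparse-controllable. -/
def SparseControllable (N L s : ℕ) (D : Matrix (Fin N) (Fin N) ℝ)
    (H : Matrix (Fin N) (Fin L) ℝ) : Prop :=
  ∀ xinit xfinal : Fin N → ℝ, ∃ K : ℕ, 0 < K ∧ ∃ h : Fin K → Fin L → ℝ,
    (∀ k, IsSparse s (h k)) ∧ Steers D H K h xinit xfinal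

/-- If `(D,H)` is controllable using `s`-sparse inputs with a common support `S`, then
`min{rank H, s} ≥ g_D ≥ N − rank D`, where `g_D` is the largest geometric multiplicity
of a complex eigenvalue of `D`. -/
theorem common_support_geometric_multiplicity_bound (N L s : ℕ) (hN : 0 < N) (hL : 0 < L)
    (hs : 0 < s) (hsL : s ≤ L)
    (D : Matrix (Fin N) (Fin N) ℝ) (H : Matrix (Fin N) (Fin L) ℝ)
    (hctrl : ∃ S : Finset (Fin L), S.card = s ∧
      ∀ xinit xfinal : Fin N → ℝ, ∃ K : ℕ, 0 < K ∧ ∃ h : Fin K → Fin L → ℝ,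
        (∀ k, ∀ j ∉ S, h k j = 0) ∧ Steers D H K h xinit xfinal)
    (gD : ℕ)
    (hgD : gD = ⨆ lam : ℂ, Module.finrank ℂ
      (LinearMap.ker ((lam • (1 : Matrix (Fin N) (Fin N) ℂ)
        - D.map Complex.ofReal).mulVecLin))) :
    N - D.rank ≤ gD ∧ gD ≤ min H.rank s := by
  classical
  obtain ⟨S, hScard, hS⟩ := hctrl
  set Dc : Matrix (Fin N) (Fin N) ℂ := D.map Complex.ofReal with hDc
  set Hc : Matrix (Fin N) (Fin L) ℂ := H.map Complex.ofReal with hHc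
  set g : ℂ → ℕ := fun lam => Module.finrank ℂ
      (LinearMap.ker ((lam • (1 : Matrix (Fin N) (Fin N) ℂ) - Dc).mulVecLin)) with hgdef
  have hgD' : gD = ⨆ lam : ℂ, g lam := hgD
  have hbdd : BddAbove (Set.range g) := by
    refine ⟨N, ?_⟩
    rintro _ ⟨lam, rfl⟩
    refine le_trans (Submodule.finrank_le _) ?_
    simp [Module.finrank_pi]
  -- key vanishing lemma
  have key : ∀ lam : ℂ, ∀ v : Fin N → ℂ,
      v ᵥ* (lam • (1 : Matrix (Fin N) (Fin N) ℂ) - Dc) = 0 →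
      (∀ j ∈ S, (v ᵥ* Hc) j = 0) → v = 0 := by
    intro lam v hv hvS
    have hvD : v ᵥ* Dc = lam • v := by
      have h1 := congrArg (fun w => w + v ᵥ* Dc) hv
      simp only [Matrix.vecMul_sub, sub_add_cancel, zero_add] at h1
      rw [← h1]
      ext i
      simp [Matrix.vecMul, dotProduct, Matrix.one_apply, Finset.mul_sum, mul_comm]
    have hpow : ∀ t : ℕ, v ᵥ* (Dc ^ t) = lam ^ t • v := by
      intro t
      induction t with
      | zero => simp [Matrix.vecMul_one]
      | succ t ih =>
        rw [pow_succ, ← Matrix.vecMul_vecMul, ih, Matrix.smul_vecMul, hvD, pow_succ, smul_smul,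
          mul_comm]
    have hHzero : ∀ u : Fin L → ℝ, (∀ j ∉ S, u j = 0) →
        v ⬝ᵥ (Hc *ᵥ (fun j => (u j : ℂ))) = 0 := by
      intro u hu
      rw [Matrix.dotProduct_mulVec, dotProduct]
      refine Finset.sum_eq_zero fun j _ => ?_
      by_cases hj : j ∈ S
      · rw [hvS j hj, zero_mul]
      · rw [hu j hj]
        simp
    have hzero : ∀ x : Fin N → ℝ, v ⬝ᵥ (fun i => (x i : ℂ)) = 0 := by
      intro x
      obtain ⟨K, hK, h, hsupp, hsteer⟩ := hS 0 x
      have hx : x = ∑ k : Fin K, (D ^ (K - 1 - (k : ℕ))) *ᵥ (H *ᵥ h k) := by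
        simpa [Steers, Matrix.mulVec_zero] using hsteer
      have hxc : (fun i => ((x i : ℝ) : ℂ)) =
          ∑ k : Fin K, (Dc ^ (K - 1 - (k : ℕ))) *ᵥ (Hc *ᵥ (fun j => ((h k j : ℝ) : ℂ))) := by
        funext i
        rw [show x = _ from hx]
        rw [Finset.sum_apply, Finset.sum_apply]
        push_cast
        refine Finset.sum_congr rfl fun k _ => ?_
        have e1 : ((( (D ^ (K - 1 - (k : ℕ))) *ᵥ (H *ᵥ h k)) i : ℝ) : ℂ)
            = ((D ^ (K - 1 - (k : ℕ))).map Complex.ofRealHom *ᵥ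
                (Complex.ofRealHom ∘ (H *ᵥ h k))) i :=
          RingHom.map_mulVec Complex.ofRealHom _ _ i
        have e2 : (Complex.ofRealHom ∘ (H *ᵥ h k)) =
            (H.map Complex.ofRealHom *ᵥ (Complex.ofRealHom ∘ h k)) := by
          funext i'
          exact RingHom.map_mulVec Complex.ofRealHom _ _ i'
        have e3 : (D ^ (K - 1 - (k : ℕ))).map Complex.ofRealHom
            = (D.map Complex.ofRealHom) ^ (K - 1 - (k : ℕ)) := by
          have := map_pow (Complex.ofRealHom.mapMatrix) D (K - 1 - (k : ℕ))
          simpa [RingHom.mapMatrix_apply] using this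
        rw [e1, e2, e3]
        rfl
      rw [hxc]
      have hswap : v ⬝ᵥ (∑ k : Fin K,
          (Dc ^ (K - 1 - (k : ℕ))) *ᵥ (Hc *ᵥ (fun j => ((h k j : ℝ) : ℂ))))
          = ∑ k : Fin K, v ⬝ᵥ ((Dc ^ (K - 1 - (k : ℕ))) *ᵥ
              (Hc *ᵥ (fun j => ((h k j : ℝ) : ℂ)))) := by
        simp [dotProduct, Finset.sum_apply, Finset.mul_sum]
        exact Finset.sum_comm
      rw [hswap]
      refine Finset.sum_eq_zero fun k _ => ?_
      rw [Matrix.dotProduct_mulVec, hpow, smul_dotProduct, hHzero _ (hsupp k), smul_zero]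
    funext i0
    have h4 := hzero (Pi.single i0 1)
    rw [dotProduct] at h4
    simpa [Pi.single_apply, apply_ite] using h4
  -- per-eigenvalue bound
  have hbound : ∀ lam : ℂ, g lam ≤ min H.rank s := by
    intro lam
    set A : Matrix (Fin N) (Fin N) ℂ := lam • (1 : Matrix (Fin N) (Fin N) ℂ) - Dc with hAdef
    have h1 : g lam = Module.finrank ℂ (LinearMap.ker (Aᵀ).mulVecLin) := by
      show Module.finrank ℂ (LinearMap.ker A.mulVecLin) = _
      rw [finrank_ker_eq, finrank_ker_eq, Matrix.rank_transpose]
    set W := LinearMap.ker (Aᵀ).mulVecLin with hW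
    have hWkey : ∀ v : Fin N → ℂ, v ∈ W → (∀ j ∈ S, (v ᵥ* Hc) j = 0) → v = 0 := by
      intro v hv hvS
      refine key lam v ?_ hvS
      have h2 : Aᵀ *ᵥ v = 0 := hv
      rwa [Matrix.mulVec_transpose] at h2
    have hles : Module.finrank ℂ W ≤ s := by
      let χ : W →ₗ[ℂ] ({j // j ∈ S} → ℂ) :=
        (LinearMap.funLeft ℂ ℂ (fun j : {j // j ∈ S} => (j : Fin L))).comp
          ((Hcᵀ).mulVecLin.comp W.subtype)
      have hinj : Function.Injective χ := by
        rw [← LinearMap.ker_eq_bot, LinearMap.ker_eq_bot']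
        intro v hv0
        have hv1 : ∀ j ∈ S, ((v : Fin N → ℂ) ᵥ* Hc) j = 0 := by
          intro j hj
          have := congrFun hv0 ⟨j, hj⟩
          simpa [χ, LinearMap.funLeft, Matrix.mulVec_transpose] using this
        exact Subtype.ext (hWkey v v.2 hv1)
      have h3 := LinearMap.finrank_le_finrank_of_injective hinj
      rw [Module.finrank_pi] at h3
      simpa [hScard] using h3
    have hler : Module.finrank ℂ W ≤ H.rank := by
      let φ : W →ₗ[ℂ] (LinearMap.range (Hcᵀ).mulVecLin) :=
        LinearMap.codRestrict _ ((Hcᵀ).mulVecLin.comp W.subtype)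
          (fun v => ⟨v, rfl⟩)
      have hinj : Function.Injective φ := by
        rw [← LinearMap.ker_eq_bot, LinearMap.ker_eq_bot']
        intro v hv0
        have hv1 : Hcᵀ *ᵥ (v : Fin N → ℂ) = 0 := congrArg Subtype.val hv0
        rw [Matrix.mulVec_transpose] at hv1
        have hv2 : ∀ j ∈ S, ((v : Fin N → ℂ) ᵥ* Hc) j = 0 := by
          intro j _; rw [hv1]; rfl
        exact Subtype.ext (hWkey v v.2 hv2)
      have h3 := LinearMap.finrank_le_finrank_of_injective hinj
      have h4 : Module.finrank ℂ (LinearMap.range (Hcᵀ).mulVecLin) = (Hcᵀ).rank := rfl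
      rw [h4, Matrix.rank_transpose] at h3
      exact h3.trans (rank_map_ofReal_le H)
    rw [h1]
    exact le_min hler hles
  constructor
  · have h0 : LinearMap.ker (((0:ℂ) • (1 : Matrix (Fin N) (Fin N) ℂ) - Dc)).mulVecLin
        = LinearMap.ker Dc.mulVecLin := by
      ext v
      simp [Matrix.mulVecLin_apply, zero_smul, zero_sub, Matrix.neg_mulVec, neg_eq_zero]
    have hg0 : g 0 = N - Dc.rank := by
      show Module.finrank ℂ (LinearMap.ker (((0:ℂ) • (1 : Matrix (Fin N) (Fin N) ℂ)
        - Dc)).mulVecLin) = _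
      rw [h0, finrank_ker_eq]
    have hD : N - D.rank ≤ N - Dc.rank := Nat.sub_le_sub_left (rank_map_ofReal_le D) N
    rw [hgD']
    calc N - D.rank ≤ g 0 := by rw [hg0]; exact hD
      _ ≤ ⨆ lam, g lam := le_ciSup hbdd 0
  · rw [hgD']
    exact ciSup_le hbound
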